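/- Let Y ∈ ℝ^{m×n} with SVD Y = U·Diag(σ)·Vᵀ, σ nonincreasing and nonnegative. Suppose g : [0,∞) → [0,∞) is such that for each s ≥ 0, g(s) minimizes d ↦ ½(d − s)² + λρ_a(|d|) over ℝ. Then X_s = U·Diag(g(σ))·Vᵀ is a global minimizer of X ↦ ½‖X − Y‖_F² + λ∑_i ρ_a(σ_i(X)), where σ_i(X) are the singular values of X. -/

import Mathlib

open Matrix

/-- Rectangular diagonal matrix built from a vector of length `m` (with `m ≤ n`). -/
def diagMN (m n : ℕ) (σ : Fin m → ℝ) : Matrix (Fin m) (Fin n) ℝ :=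
  Matrix.of fun (i : Fin m) (j : Fin n) => if (i : ℕ) = (j : ℕ) then σ i else 0

/-- Squared Frobenius norm. -/
def frobSq (m n : ℕ) (M : Matrix (Fin m) (Fin n) ℝ) : ℝ :=
  ∑ i : Fin m, ∑ j : Fin n, (M i j) ^ 2

open Finset

open Finset

lemma cs_abs {ι : Type*} (s : Finset ι) (f g : ι → ℝ)
    (hf : ∑ i ∈ s, f i ^ 2 ≤ 1) (hg : ∑ i ∈ s, g i ^ 2 ≤ 1) :
    ∑ i ∈ s, |f i * g i| ≤ 1 := by
  have h := Finset.sum_mul_sq_le_sq_mul_sq s (fun i => |f i|) (fun i => |g i|)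
  have h1 : ∑ i ∈ s, |f i| ^ 2 = ∑ i ∈ s, f i ^ 2 := by
    refine Finset.sum_congr rfl fun i _ => sq_abs _
  have h2 : ∑ i ∈ s, |g i| ^ 2 = ∑ i ∈ s, g i ^ 2 := by
    refine Finset.sum_congr rfl fun i _ => sq_abs _
  have h3 : ∑ i ∈ s, |f i * g i| = ∑ i ∈ s, |f i| * |g i| := by
    refine Finset.sum_congr rfl fun i _ => abs_mul _ _
  have hnn : 0 ≤ ∑ i ∈ s, |f i| * |g i| :=
    Finset.sum_nonneg fun i _ => mul_nonneg (abs_nonneg _) (abs_nonneg _)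
  rw [h1, h2] at h
  have hf0 : (0:ℝ) ≤ ∑ i ∈ s, f i ^ 2 := Finset.sum_nonneg fun i _ => sq_nonneg _
  have hg0 : (0:ℝ) ≤ ∑ i ∈ s, g i ^ 2 := Finset.sum_nonneg fun i _ => sq_nonneg _
  rw [h3]
  nlinarith [h, hf, hg, hf0, hg0, hnn]

open Finset

lemma filt_range (m p : ℕ) (hp : p < m) :
    (Finset.range m).filter (fun i => i ≤ p) = Finset.range (p + 1) := by
  ext x
  simp only [mem_filter, mem_range, Nat.lt_succ_iff]
  exact ⟨fun h => h.2, fun h => ⟨lt_of_le_of_lt h hp, h⟩⟩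

lemma ite_sum_collapse (m p : ℕ) (hp : p < m) (c : ℝ) (h : ℕ → ℝ) :
    ∑ i ∈ Finset.range m, (if i ≤ p then c else 0) * h i = c * ∑ i ∈ Finset.range (p + 1), h i := by
  calc ∑ i ∈ Finset.range m, (if i ≤ p then c else 0) * h i
      = ∑ i ∈ Finset.range m, (if i ≤ p then c * h i else 0) := by
        refine Finset.sum_congr rfl fun i _ => by split_ifs <;> ring
    _ = ∑ i ∈ (Finset.range m).filter (fun i => i ≤ p), c * h i := (Finset.sum_filter _ _).symm
    _ = ∑ i ∈ Finset.range (p + 1), c * h i := by rw [filt_range m p hp]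
    _ = c * ∑ i ∈ Finset.range (p + 1), h i := by rw [Finset.mul_sum]

lemma tele (m : ℕ) (f : ℕ → ℝ) (hfm : f m = 0) (i : ℕ) (him : i < m) :
    f i = ∑ p ∈ Finset.range m, if i ≤ p then f p - f (p+1) else 0 := by
  have hfil : (Finset.range m).filter (fun p => i ≤ p) = Finset.Ico i m := by
    ext x; simp only [mem_filter, mem_range, mem_Ico]; tauto
  rw [← Finset.sum_filter, hfil,
    Finset.sum_Ico_eq_sub (fun p => f p - f (p+1)) (le_of_lt him),
    Finset.sum_range_sub' f, Finset.sum_range_sub' f]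
  ring_nf
  rw [hfm]; ring

lemma key_rearrange (m : ℕ) (τ σc : ℕ → ℝ) (C : ℕ → ℕ → ℝ)
    (hτm : τ m = 0) (hσm : σc m = 0)
    (hτa : ∀ i j, i ≤ j → τ j ≤ τ i) (hσa : ∀ i j, i ≤ j → σc j ≤ σc i)
    (hrow : ∀ i ∈ Finset.range m, ∑ k ∈ Finset.range m, |C i k| ≤ 1)
    (hcol : ∀ k ∈ Finset.range m, ∑ i ∈ Finset.range m, |C i k| ≤ 1) :
    ∑ i ∈ Finset.range m, ∑ k ∈ Finset.range m, τ i * σc k * C i k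
      ≤ ∑ i ∈ Finset.range m, τ i * σc i := by
  set α : ℕ → ℝ := fun p => τ p - τ (p + 1) with hα
  set β : ℕ → ℝ := fun q => σc q - σc (q + 1) with hβ
  have hα0 : ∀ p, 0 ≤ α p := fun p => sub_nonneg.2 (hτa p (p+1) (Nat.le_succ p))
  have hβ0 : ∀ q, 0 ≤ β q := fun q => sub_nonneg.2 (hσa q (q+1) (Nat.le_succ q))
  set S : ℕ → ℕ → ℝ := fun p q => ∑ i ∈ Finset.range (p+1), ∑ k ∈ Finset.range (q+1), C i k with hS
  -- LHS transformation
  have hLHS : ∑ i ∈ Finset.range m, ∑ k ∈ Finset.range m, τ i * σc k * C i k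
      = ∑ p ∈ Finset.range m, ∑ q ∈ Finset.range m, α p * β q * S p q := by
    have step1 : ∀ i ∈ Finset.range m, ∀ k ∈ Finset.range m,
        τ i * σc k * C i k = ∑ p ∈ Finset.range m, ∑ q ∈ Finset.range m,
          (if i ≤ p then α p else 0) * ((if k ≤ q then β q else 0) * C i k) := by
      intro i hi k hk
      rw [Finset.sum_comm]
      calc τ i * σc k * C i k
          = σc k * (τ i * C i k) := by ring
        _ = (∑ q ∈ Finset.range m, if k ≤ q then β q else 0) * (τ i * C i k) := by
            rw [← tele m σc hσm k (mem_range.1 hk)]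
        _ = ∑ q ∈ Finset.range m, (if k ≤ q then β q else 0) * (τ i * C i k) := by
            rw [Finset.sum_mul]
        _ = ∑ q ∈ Finset.range m, ∑ p ∈ Finset.range m,
              (if i ≤ p then α p else 0) * ((if k ≤ q then β q else 0) * C i k) := by
            refine Finset.sum_congr rfl fun q _ => ?_
            calc (if k ≤ q then β q else 0) * (τ i * C i k)
                = τ i * ((if k ≤ q then β q else 0) * C i k) := by ring
              _ = (∑ p ∈ Finset.range m, if i ≤ p then α p else 0) *
                    ((if k ≤ q then β q else 0) * C i k) := by
                  rw [← tele m τ hτm i (mem_range.1 hi)]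
              _ = _ := by rw [Finset.sum_mul]
    calc ∑ i ∈ Finset.range m, ∑ k ∈ Finset.range m, τ i * σc k * C i k
        = ∑ i ∈ Finset.range m, ∑ k ∈ Finset.range m, ∑ p ∈ Finset.range m,
            ∑ q ∈ Finset.range m, (if i ≤ p then α p else 0) * ((if k ≤ q then β q else 0) * C i k) := by
          exact Finset.sum_congr rfl fun i hi => Finset.sum_congr rfl fun k hk => step1 i hi k hk
      _ = ∑ i ∈ Finset.range m, ∑ p ∈ Finset.range m, ∑ k ∈ Finset.range m,
            ∑ q ∈ Finset.range m, (if i ≤ p then α p else 0) * ((if k ≤ q then β q else 0) * C i k) := by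
          exact Finset.sum_congr rfl fun i _ => Finset.sum_comm
      _ = ∑ p ∈ Finset.range m, ∑ i ∈ Finset.range m, ∑ k ∈ Finset.range m,
            ∑ q ∈ Finset.range m, (if i ≤ p then α p else 0) * ((if k ≤ q then β q else 0) * C i k) := by
          exact Finset.sum_comm
      _ = ∑ p ∈ Finset.range m, ∑ i ∈ Finset.range m, ∑ q ∈ Finset.range m,
            ∑ k ∈ Finset.range m, (if i ≤ p then α p else 0) * ((if k ≤ q then β q else 0) * C i k) := by
          exact Finset.sum_congr rfl fun p _ => Finset.sum_congr rfl fun i _ => Finset.sum_comm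
      _ = ∑ p ∈ Finset.range m, ∑ q ∈ Finset.range m, ∑ i ∈ Finset.range m,
            ∑ k ∈ Finset.range m, (if i ≤ p then α p else 0) * ((if k ≤ q then β q else 0) * C i k) := by
          exact Finset.sum_congr rfl fun p _ => Finset.sum_comm
      _ = ∑ p ∈ Finset.range m, ∑ q ∈ Finset.range m, α p * β q * S p q := by
          refine Finset.sum_congr rfl fun p hp => Finset.sum_congr rfl fun q hq => ?_
          have inner : ∀ i, ∑ k ∈ Finset.range m,
              (if i ≤ p then α p else 0) * ((if k ≤ q then β q else 0) * C i k)
              = (if i ≤ p then α p else 0) * (β q * ∑ k ∈ Finset.range (q+1), C i k) := by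
            intro i
            rw [← Finset.mul_sum, ite_sum_collapse m q (mem_range.1 hq) (β q) (fun k => C i k)]
          rw [Finset.sum_congr rfl (fun i _ => inner i),
            ite_sum_collapse m p (mem_range.1 hp) (α p)
              (fun i => β q * ∑ k ∈ Finset.range (q+1), C i k), ← Finset.mul_sum, hS]
          ring
  -- RHS transformation
  have hRHS : ∑ i ∈ Finset.range m, τ i * σc i
      = ∑ p ∈ Finset.range m, ∑ q ∈ Finset.range m, α p * β q * ((min p q + 1 : ℕ) : ℝ) := by
    have step1 : ∀ i ∈ Finset.range m, τ i * σc i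
        = ∑ p ∈ Finset.range m, ∑ q ∈ Finset.range m,
            (if i ≤ p then α p else 0) * (if i ≤ q then β q else 0) := by
      intro i hi
      rw [tele m τ hτm i (mem_range.1 hi), tele m σc hσm i (mem_range.1 hi),
        Finset.sum_mul_sum]
    rw [Finset.sum_congr rfl step1, Finset.sum_comm]
    refine Finset.sum_congr rfl fun p hp => ?_
    rw [Finset.sum_comm]
    refine Finset.sum_congr rfl fun q hq => ?_
    -- ∑ i ∈ range m, (if i ≤ p then α p else 0) * (if i ≤ q then β q else 0)
    have hmin : min p q < m := lt_of_le_of_lt (min_le_left _ _) (mem_range.1 hp)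
    calc ∑ i ∈ Finset.range m, (if i ≤ p then α p else 0) * (if i ≤ q then β q else 0)
        = ∑ i ∈ Finset.range m, (if i ≤ min p q then α p * β q else 0) * 1 := by
          refine Finset.sum_congr rfl fun i _ => ?_
          by_cases h1 : i ≤ p <;> by_cases h2 : i ≤ q <;>
            simp [le_min_iff, h1, h2]
      _ = (α p * β q) * ∑ i ∈ Finset.range (min p q + 1), (1:ℝ) :=
          ite_sum_collapse m (min p q) hmin _ _
      _ = α p * β q * ((min p q + 1 : ℕ) : ℝ) := by
          rw [Finset.sum_const, Finset.card_range, nsmul_eq_mul, mul_one]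
  rw [hLHS, hRHS]
  refine Finset.sum_le_sum fun p hp => Finset.sum_le_sum fun q hq => ?_
  refine mul_le_mul_of_nonneg_left ?_ (mul_nonneg (hα0 p) (hβ0 q))
  -- S p q ≤ min p q + 1
  have habs : ∀ (D : ℕ → ℕ → ℝ), (∀ i ∈ Finset.range m, ∑ k ∈ Finset.range m, |D i k| ≤ 1) →
      ∀ (P Q : ℕ), P < m → Q < m →
      ∑ i ∈ Finset.range (P+1), ∑ k ∈ Finset.range (Q+1), D i k ≤ ((P + 1 : ℕ) : ℝ) := by
    intro D hD P Q hP hQ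
    calc ∑ i ∈ Finset.range (P+1), ∑ k ∈ Finset.range (Q+1), D i k
        ≤ ∑ i ∈ Finset.range (P+1), ∑ k ∈ Finset.range (Q+1), |D i k| :=
          Finset.sum_le_sum fun i _ => Finset.sum_le_sum fun k _ => le_abs_self _
      _ ≤ ∑ i ∈ Finset.range (P+1), ∑ k ∈ Finset.range m, |D i k| := by
          refine Finset.sum_le_sum fun i _ => ?_
          exact Finset.sum_le_sum_of_subset_of_nonneg
            (Finset.range_subset_range.2 hQ) (fun k _ _ => abs_nonneg _)
      _ ≤ ∑ i ∈ Finset.range (P+1), (1:ℝ) := by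
          refine Finset.sum_le_sum fun i hi => ?_
          exact hD i (mem_range.2 (lt_of_lt_of_le (mem_range.1 hi) hP))
      _ = ((P + 1 : ℕ) : ℝ) := by rw [Finset.sum_const, Finset.card_range, nsmul_eq_mul, mul_one]
  have h1 : S p q ≤ ((p + 1 : ℕ) : ℝ) := habs C hrow p q (mem_range.1 hp) (mem_range.1 hq)
  have h2 : S p q ≤ ((q + 1 : ℕ) : ℝ) := by
    have hswap : S p q = ∑ k ∈ Finset.range (q+1), ∑ i ∈ Finset.range (p+1), C i k :=
      Finset.sum_comm
    rw [hswap]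
    exact habs (fun i k => C k i) hcol q p (mem_range.1 hq) (mem_range.1 hp)
  rcases le_total p q with h | h
  · rw [min_eq_left h]; exact h1
  · rw [min_eq_right h]; exact h2

noncomputable def innerM (m n : ℕ) (M N : Matrix (Fin m) (Fin n) ℝ) : ℝ :=
  ∑ i : Fin m, ∑ j : Fin n, M i j * N i j

-- collapse of rectangular-diagonal sums
lemma sum_diag_collapse (m n : ℕ) (hmn : m ≤ n) (i : Fin m) (f : Fin n → ℝ) (c : Fin m → ℝ) :
    ∑ j : Fin n, (if (i : ℕ) = (j : ℕ) then c i else 0) * f j = c i * f (Fin.castLE hmn i) := by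
  have : ∀ j : Fin n, (if (i : ℕ) = (j : ℕ) then c i else 0) * f j
      = if j = Fin.castLE hmn i then c i * f j else 0 := by
    intro j
    by_cases h : (i : ℕ) = (j : ℕ)
    · rw [if_pos h, if_pos (by ext; exact h.symm)]
    · rw [if_neg h, if_neg (by intro hj; exact h (by rw [hj]; rfl)), zero_mul]
  rw [Finset.sum_congr rfl fun j _ => this j, Finset.sum_ite_eq' Finset.univ (Fin.castLE hmn i)
    (fun j => c i * f j)]
  simp

lemma innerM_trace (m n : ℕ) (M N : Matrix (Fin m) (Fin n) ℝ) :
    innerM m n M N = Matrix.trace (M * Nᵀ) := by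
  simp [innerM, Matrix.trace, Matrix.mul_apply, Matrix.diag]

lemma frobSq_trace (m n : ℕ) (M : Matrix (Fin m) (Fin n) ℝ) :
    frobSq m n M = Matrix.trace (M * Mᵀ) := by
  simp [frobSq, Matrix.trace, Matrix.mul_apply, Matrix.diag, sq]

lemma frobSq_conj (m n : ℕ) (U : Matrix (Fin m) (Fin m) ℝ) (V : Matrix (Fin n) (Fin n) ℝ)
    (hU : Uᵀ * U = 1) (hV : Vᵀ * V = 1) (M : Matrix (Fin m) (Fin n) ℝ) :
    frobSq m n (U * M * Vᵀ) = frobSq m n M := by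
  rw [frobSq_trace, frobSq_trace]
  have : (U * M * Vᵀ) * (U * M * Vᵀ)ᵀ = U * (M * Mᵀ) * Uᵀ := by
    rw [Matrix.transpose_mul, Matrix.transpose_mul, Matrix.transpose_transpose]
    calc U * M * Vᵀ * (V * (Mᵀ * Uᵀ)) = U * M * (Vᵀ * V) * (Mᵀ * Uᵀ) := by
          simp only [Matrix.mul_assoc]
      _ = U * (M * Mᵀ) * Uᵀ := by rw [hV]; simp only [Matrix.mul_one, Matrix.mul_assoc]
  rw [this, Matrix.trace_mul_comm, ← Matrix.mul_assoc, ← Matrix.mul_assoc, hU, Matrix.one_mul]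

lemma frobSq_diagMN (m n : ℕ) (hmn : m ≤ n) (δ : Fin m → ℝ) :
    frobSq m n (diagMN m n δ) = ∑ i : Fin m, δ i ^ 2 := by
  unfold frobSq diagMN
  refine Finset.sum_congr rfl fun i _ => ?_
  have h1 : ∀ j : Fin n, ((Matrix.of fun (i : Fin m) (j : Fin n) =>
      if (i : ℕ) = (j : ℕ) then δ i else 0) i j) ^ 2
      = (if (i : ℕ) = (j : ℕ) then δ i else 0) * (fun _ => δ i) j := by
    intro j; by_cases h : (i : ℕ) = (j : ℕ) <;> simp [h, sq]
  rw [Finset.sum_congr rfl fun j _ => h1 j, sum_diag_collapse m n hmn i (fun _ => δ i) δ, sq]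

lemma diagMN_sub (m n : ℕ) (δ ε : Fin m → ℝ) :
    diagMN m n δ - diagMN m n ε = diagMN m n (fun i => δ i - ε i) := by
  ext i j
  simp only [diagMN, Matrix.sub_apply, Matrix.of_apply]
  split_ifs <;> simp

lemma frobSq_expand (m n : ℕ) (M N : Matrix (Fin m) (Fin n) ℝ) :
    frobSq m n (M - N) = frobSq m n M - 2 * innerM m n M N + frobSq m n N := by
  unfold frobSq innerM
  rw [Finset.mul_sum, ← Finset.sum_sub_distrib, ← Finset.sum_add_distrib]
  refine Finset.sum_congr rfl fun i _ => ?_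
  rw [Finset.mul_sum, ← Finset.sum_sub_distrib, ← Finset.sum_add_distrib]
  refine Finset.sum_congr rfl fun j _ => ?_
  simp [Matrix.sub_apply]; ring

-- trace entry formula for D₁ * (B * D₂ᵀ * A)
lemma vn_trace_formula (m n : ℕ) (hmn : m ≤ n)
    (A : Matrix (Fin m) (Fin m) ℝ) (B : Matrix (Fin n) (Fin n) ℝ) (τ σc : Fin m → ℝ) :
    Matrix.trace (diagMN m n τ * ((B * (diagMN m n σc)ᵀ) * A))
      = ∑ i : Fin m, ∑ l : Fin m,
          τ i * σc l * (B (Fin.castLE hmn i) (Fin.castLE hmn l) * A l i) := by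
  have hBD : ∀ (j : Fin n) (l : Fin m),
      (B * (diagMN m n σc)ᵀ) j l = B j (Fin.castLE hmn l) * σc l := by
    intro j l
    rw [Matrix.mul_apply]
    have : ∀ k : Fin n, B j k * (diagMN m n σc)ᵀ k l
        = (if (l : ℕ) = (k : ℕ) then σc l else 0) * B j k := by
      intro k; simp [diagMN, Matrix.transpose_apply]; ring
    rw [Finset.sum_congr rfl fun k _ => this k,
      sum_diag_collapse m n hmn l (fun k => B j k) σc]
    ring
  rw [Matrix.trace]
  have hdiag : ∀ i : Fin m, (diagMN m n τ * ((B * (diagMN m n σc)ᵀ) * A)).diag i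
      = ∑ l : Fin m, τ i * σc l * (B (Fin.castLE hmn i) (Fin.castLE hmn l) * A l i) := by
    intro i
    rw [Matrix.diag_apply, Matrix.mul_apply]
    have : ∀ j : Fin n, diagMN m n τ i j * ((B * (diagMN m n σc)ᵀ) * A) j i
        = (if (i : ℕ) = (j : ℕ) then τ i else 0) * ((B * (diagMN m n σc)ᵀ) * A) j i := by
      intro j; simp [diagMN]
    rw [Finset.sum_congr rfl fun j _ => this j,
      sum_diag_collapse m n hmn i (fun j => ((B * (diagMN m n σc)ᵀ) * A) j i) τ,
      Matrix.mul_apply]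
    rw [Finset.mul_sum]
    refine Finset.sum_congr rfl fun l _ => ?_
    rw [hBD]
    ring
  exact Finset.sum_congr rfl fun i _ => hdiag i

-- von Neumann core: Fin-indexed substochastic bound
lemma vn_core (m n : ℕ) (hmn : m ≤ n)
    (A : Matrix (Fin m) (Fin m) ℝ) (B : Matrix (Fin n) (Fin n) ℝ)
    (hA1 : A * Aᵀ = 1) (hA2 : Aᵀ * A = 1) (hB1 : B * Bᵀ = 1) (hB2 : Bᵀ * B = 1)
    (τ σc : Fin m → ℝ) (hτ0 : ∀ i, 0 ≤ τ i) (hσ0 : ∀ i, 0 ≤ σc i)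
    (hτa : Antitone τ) (hσa : Antitone σc) :
    ∑ i : Fin m, ∑ l : Fin m,
        τ i * σc l * (B (Fin.castLE hmn i) (Fin.castLE hmn l) * A l i)
      ≤ ∑ i : Fin m, τ i * σc i := by
  classical
  -- ℕ-extended functions
  set τ' : ℕ → ℝ := fun p => if h : p < m then τ ⟨p, h⟩ else 0 with hτ'
  set σ' : ℕ → ℝ := fun p => if h : p < m then σc ⟨p, h⟩ else 0 with hσ'
  set C : ℕ → ℕ → ℝ := fun p q =>
    if hp : p < m then if hq : q < m then
      B (Fin.castLE hmn (⟨p, hp⟩ : Fin m)) (Fin.castLE hmn (⟨q, hq⟩ : Fin m)) * A ⟨q, hq⟩ ⟨p, hp⟩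
    else 0 else 0 with hC
  have hτ'0 : ∀ p, 0 ≤ τ' p := by intro p; rw [hτ']; dsimp; split_ifs; exacts [hτ0 _, le_refl 0]
  have hσ'0 : ∀ p, 0 ≤ σ' p := by intro p; rw [hσ']; dsimp; split_ifs; exacts [hσ0 _, le_refl 0]
  have hτ'a : ∀ i j : ℕ, i ≤ j → τ' j ≤ τ' i := by
    intro i j hij; rw [hτ']; dsimp
    split_ifs with h1 h2 h2
    · exact hτa (by exact_mod_cast hij)
    · exact absurd (lt_of_le_of_lt hij h1) h2
    · exact hτ0 _
    · exact le_refl 0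
  have hσ'a : ∀ i j : ℕ, i ≤ j → σ' j ≤ σ' i := by
    intro i j hij; rw [hσ']; dsimp
    split_ifs with h1 h2 h2
    · exact hσa (by exact_mod_cast hij)
    · exact absurd (lt_of_le_of_lt hij h1) h2
    · exact hσ0 _
    · exact le_refl 0
  -- row/column norms of A and B
  have hArow : ∀ i : Fin m, ∑ l : Fin m, A i l ^ 2 = 1 := by
    intro i
    have := congrFun (congrFun hA1 i) i
    simpa [Matrix.mul_apply, Matrix.one_apply, sq] using this
  have hAcol : ∀ i : Fin m, ∑ l : Fin m, A l i ^ 2 = 1 := by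
    intro i
    have := congrFun (congrFun hA2 i) i
    simpa [Matrix.mul_apply, Matrix.one_apply, sq] using this
  have hBrow : ∀ j : Fin n, ∑ k : Fin n, B j k ^ 2 = 1 := by
    intro j
    have := congrFun (congrFun hB1 j) j
    simpa [Matrix.mul_apply, Matrix.one_apply, sq] using this
  have hBcol : ∀ j : Fin n, ∑ k : Fin n, B k j ^ 2 = 1 := by
    intro j
    have := congrFun (congrFun hB2 j) j
    simpa [Matrix.mul_apply, Matrix.one_apply, sq] using this
  -- partial sums of B-row squares over the embedded Fin m
  have hBsub_row : ∀ j : Fin n, ∑ l : Fin m, B j (Fin.castLE hmn l) ^ 2 ≤ 1 := by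
    intro j
    rw [← hBrow j]
    have : ∑ l : Fin m, B j (Fin.castLE hmn l) ^ 2
        = ∑ k ∈ Finset.univ.map ⟨Fin.castLE hmn, Fin.castLE_injective hmn⟩, B j k ^ 2 := by
      rw [Finset.sum_map]; rfl
    rw [this]
    exact Finset.sum_le_sum_of_subset_of_nonneg (Finset.subset_univ _)
      (fun k _ _ => sq_nonneg _)
  have hBsub_col : ∀ j : Fin n, ∑ l : Fin m, B (Fin.castLE hmn l) j ^ 2 ≤ 1 := by
    intro j
    rw [← hBcol j]
    have : ∑ l : Fin m, B (Fin.castLE hmn l) j ^ 2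
        = ∑ k ∈ Finset.univ.map ⟨Fin.castLE hmn, Fin.castLE_injective hmn⟩, B k j ^ 2 := by
      rw [Finset.sum_map]; rfl
    rw [this]
    exact Finset.sum_le_sum_of_subset_of_nonneg (Finset.subset_univ _)
      (fun k _ _ => sq_nonneg _)
  -- rows/cols of C are absolutely bounded by 1
  have hrow : ∀ p ∈ Finset.range m, ∑ q ∈ Finset.range m, |C p q| ≤ 1 := by
    intro p hp
    have hpm := Finset.mem_range.1 hp
    have : ∑ q ∈ Finset.range m, |C p q|
        = ∑ l : Fin m, |B (Fin.castLE hmn (⟨p, hpm⟩ : Fin m)) (Fin.castLE hmn l) * A l ⟨p, hpm⟩| := by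
      rw [← Fin.sum_univ_eq_sum_range (fun q => |C p q|) m]
      refine Finset.sum_congr rfl fun l _ => ?_
      rw [hC]; dsimp; rw [dif_pos hpm, dif_pos l.isLt]; rfl
    rw [this]
    exact cs_abs Finset.univ _ _ (hBsub_row _) (le_of_eq (hAcol _))
  have hcol : ∀ q ∈ Finset.range m, ∑ p ∈ Finset.range m, |C p q| ≤ 1 := by
    intro q hq
    have hqm := Finset.mem_range.1 hq
    have : ∑ p ∈ Finset.range m, |C p q|
        = ∑ i : Fin m, |B (Fin.castLE hmn i) (Fin.castLE hmn (⟨q, hqm⟩ : Fin m)) * A ⟨q, hqm⟩ i| := by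
      rw [← Fin.sum_univ_eq_sum_range (fun p => |C p q|) m]
      refine Finset.sum_congr rfl fun i _ => ?_
      rw [hC]; dsimp; rw [dif_pos i.isLt, dif_pos hqm]; rfl
    rw [this]
    exact cs_abs Finset.univ _ _ (hBsub_col _) (le_of_eq (hArow _))
  have hkey := key_rearrange m τ' σ' C
    (by rw [hτ']; dsimp; rw [dif_neg (lt_irrefl m)])
    (by rw [hσ']; dsimp; rw [dif_neg (lt_irrefl m)])
    hτ'a hσ'a hrow hcol
  -- translate sums
  have hL : ∑ i : Fin m, ∑ l : Fin m,
      τ i * σc l * (B (Fin.castLE hmn i) (Fin.castLE hmn l) * A l i)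
      = ∑ i ∈ Finset.range m, ∑ k ∈ Finset.range m, τ' i * σ' k * C i k := by
    rw [← Fin.sum_univ_eq_sum_range (fun i => ∑ k ∈ Finset.range m, τ' i * σ' k * C i k) m]
    refine Finset.sum_congr rfl fun i _ => ?_
    rw [← Fin.sum_univ_eq_sum_range (fun k => τ' (i:ℕ) * σ' k * C i k) m]
    refine Finset.sum_congr rfl fun l _ => ?_
    rw [hτ', hσ', hC]; dsimp
    simp only [i.isLt, l.isLt, dif_pos, if_pos]
    rfl
  have hR : ∑ i : Fin m, τ i * σc i = ∑ i ∈ Finset.range m, τ' i * σ' i := by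
    rw [← Fin.sum_univ_eq_sum_range (fun i => τ' i * σ' i) m]
    refine Finset.sum_congr rfl fun i _ => ?_
    rw [hτ', hσ']; dsimp
    simp [i.isLt]
  rw [hL, hR]
  exact hkey

lemma vonNeumann (m n : ℕ) (hmn : m ≤ n)
    (U₁ U₂ : Matrix (Fin m) (Fin m) ℝ) (V₁ V₂ : Matrix (Fin n) (Fin n) ℝ)
    (hU₁ : U₁ * U₁ᵀ = 1) (hU₁' : U₁ᵀ * U₁ = 1)
    (hU₂ : U₂ * U₂ᵀ = 1) (hU₂' : U₂ᵀ * U₂ = 1)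
    (hV₁ : V₁ * V₁ᵀ = 1) (hV₁' : V₁ᵀ * V₁ = 1)
    (hV₂ : V₂ * V₂ᵀ = 1) (hV₂' : V₂ᵀ * V₂ = 1)
    (τ σc : Fin m → ℝ) (hτ0 : ∀ i, 0 ≤ τ i) (hσ0 : ∀ i, 0 ≤ σc i)
    (hτa : Antitone τ) (hσa : Antitone σc) :
    innerM m n (U₁ * diagMN m n τ * V₁ᵀ) (U₂ * diagMN m n σc * V₂ᵀ)
      ≤ ∑ i : Fin m, τ i * σc i := by
  have h1 : innerM m n (U₁ * diagMN m n τ * V₁ᵀ) (U₂ * diagMN m n σc * V₂ᵀ)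
      = Matrix.trace (diagMN m n τ * (((V₁ᵀ * V₂) * (diagMN m n σc)ᵀ) * (U₂ᵀ * U₁))) := by
    rw [innerM_trace, Matrix.transpose_mul, Matrix.transpose_mul, Matrix.transpose_transpose]
    rw [show U₁ * diagMN m n τ * V₁ᵀ * (V₂ * ((diagMN m n σc)ᵀ * U₂ᵀ))
        = U₁ * (diagMN m n τ * (V₁ᵀ * (V₂ * ((diagMN m n σc)ᵀ * U₂ᵀ)))) from by
      simp only [Matrix.mul_assoc]]
    rw [Matrix.trace_mul_comm]
    congr 1
    simp only [Matrix.mul_assoc]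
  rw [h1, vn_trace_formula m n hmn (U₂ᵀ * U₁) (V₁ᵀ * V₂) τ σc]
  refine vn_core m n hmn (U₂ᵀ * U₁) (V₁ᵀ * V₂) ?_ ?_ ?_ ?_ τ σc hτ0 hσ0 hτa hσa
  · rw [Matrix.transpose_mul, Matrix.transpose_transpose]
    calc U₂ᵀ * U₁ * (U₁ᵀ * U₂) = U₂ᵀ * (U₁ * U₁ᵀ) * U₂ := by simp only [Matrix.mul_assoc]
      _ = 1 := by rw [hU₁, Matrix.mul_one, hU₂']
  · rw [Matrix.transpose_mul, Matrix.transpose_transpose]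
    calc U₁ᵀ * U₂ * (U₂ᵀ * U₁) = U₁ᵀ * (U₂ * U₂ᵀ) * U₁ := by simp only [Matrix.mul_assoc]
      _ = 1 := by rw [hU₂, Matrix.mul_one, hU₁']
  · rw [Matrix.transpose_mul, Matrix.transpose_transpose]
    calc V₁ᵀ * V₂ * (V₂ᵀ * V₁) = V₁ᵀ * (V₂ * V₂ᵀ) * V₁ := by simp only [Matrix.mul_assoc]
      _ = 1 := by rw [hV₂, Matrix.mul_one, hV₁']
  · rw [Matrix.transpose_mul, Matrix.transpose_transpose]
    calc V₂ᵀ * V₁ * (V₁ᵀ * V₂) = V₂ᵀ * (V₁ * V₁ᵀ) * V₂ := by simp only [Matrix.mul_assoc]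
      _ = 1 := by rw [hV₁, Matrix.mul_one, hV₂']

open Polynomial in
lemma charpoly_conj (m : ℕ) (W N : Matrix (Fin m) (Fin m) ℝ)
    (hW : W * Wᵀ = 1) (hW' : Wᵀ * W = 1) :
    (W * N * Wᵀ).charpoly = N.charpoly := by
  unfold Matrix.charpoly
  have hmap : ∀ P Q : Matrix (Fin m) (Fin m) ℝ,
      (C : ℝ →+* ℝ[X]).mapMatrix (P * Q) = (C : ℝ →+* ℝ[X]).mapMatrix P *
        (C : ℝ →+* ℝ[X]).mapMatrix Q := fun P Q => map_mul _ P Q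
  set W' : Matrix (Fin m) (Fin m) ℝ[X] := (C : ℝ →+* ℝ[X]).mapMatrix W with hW'def
  set W'' : Matrix (Fin m) (Fin m) ℝ[X] := (C : ℝ →+* ℝ[X]).mapMatrix Wᵀ with hW''def
  have hWW : W' * W'' = 1 := by
    rw [hW'def, hW''def, ← hmap, hW, _root_.map_one]
  have hcm : Matrix.charmatrix (W * N * Wᵀ) = W' * Matrix.charmatrix N * W'' := by
    rw [Matrix.charmatrix, Matrix.charmatrix, hmap, hmap]
    rw [Matrix.mul_sub, Matrix.sub_mul]
    congr 1
    · -- W' * scalar X * W'' = scalar X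
      have : W' * Matrix.scalar (Fin m) (X : ℝ[X]) = Matrix.scalar (Fin m) (X : ℝ[X]) * W' := by
        rw [Matrix.scalar_commute]
        intro r
        exact Commute.all _ _
      rw [this, Matrix.mul_assoc, hWW, Matrix.mul_one]
  rw [hcm, Matrix.det_mul, Matrix.det_mul]
  have hdet : W'.det * W''.det = 1 := by
    rw [← Matrix.det_mul, hWW, Matrix.det_one]
  calc W'.det * (Matrix.charmatrix N).det * W''.det
      = (Matrix.charmatrix N).det * (W'.det * W''.det) := by ring
    _ = (Matrix.charmatrix N).det := by rw [hdet, mul_one]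

open Polynomial in
lemma charpoly_diag_eq (m : ℕ) (d : Fin m → ℝ) :
    (Matrix.diagonal d).charpoly = ∏ i : Fin m, (X - C (d i)) := by
  rw [Matrix.charpoly_of_upperTriangular (Matrix.diagonal d) (Matrix.blockTriangular_diagonal d)]
  refine Finset.prod_congr rfl fun i _ => ?_
  rw [Matrix.diagonal_apply_eq]

lemma diag_conj_multiset (m : ℕ) (W : Matrix (Fin m) (Fin m) ℝ)
    (hW : W * Wᵀ = 1) (hW' : Wᵀ * W = 1) (d e : Fin m → ℝ)
    (h : Matrix.diagonal d = W * Matrix.diagonal e * Wᵀ) :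
    Multiset.map d Finset.univ.val = Multiset.map e Finset.univ.val := by
  classical
  have hcp : (Matrix.diagonal d).charpoly = (Matrix.diagonal e).charpoly := by
    rw [h, charpoly_conj m W _ hW hW']
  rw [charpoly_diag_eq, charpoly_diag_eq] at hcp
  have hd : (∏ i : Fin m, (Polynomial.X - Polynomial.C (d i)))
      = ((Multiset.map d Finset.univ.val).map fun a => Polynomial.X - Polynomial.C a).prod := by
    rw [Multiset.map_map, Finset.prod_eq_multiset_prod]
    rfl
  have he : (∏ i : Fin m, (Polynomial.X - Polynomial.C (e i)))
      = ((Multiset.map e Finset.univ.val).map fun a => Polynomial.X - Polynomial.C a).prod := by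
    rw [Multiset.map_map, Finset.prod_eq_multiset_prod]
    rfl
  have := congrArg Polynomial.roots (hd ▸ he ▸ hcp)
  rwa [Polynomial.roots_multiset_prod_X_sub_C, Polynomial.roots_multiset_prod_X_sub_C] at this

lemma diagMN_mul_transpose (m n : ℕ) (hmn : m ≤ n) (δ : Fin m → ℝ) :
    diagMN m n δ * (diagMN m n δ)ᵀ = Matrix.diagonal (fun i => δ i ^ 2) := by
  ext i k
  rw [Matrix.mul_apply]
  by_cases hik : i = k
  · subst hik
    have : ∀ j : Fin n, diagMN m n δ i j * (diagMN m n δ)ᵀ j i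
        = (if (i : ℕ) = (j : ℕ) then δ i else 0) * (fun j => (if (i : ℕ) = (j : ℕ) then δ i else 0)) j := by
      intro j; simp [diagMN, Matrix.transpose_apply]
    rw [Finset.sum_congr rfl fun j _ => this j, sum_diag_collapse m n hmn i _ δ]
    simp [sq]
  · rw [Matrix.diagonal_apply_ne _ hik]
    refine Finset.sum_eq_zero fun j _ => ?_
    simp only [diagMN, Matrix.transpose_apply, Matrix.of_apply]
    split_ifs with h1 h2
    · exact absurd (Fin.ext (h1.trans h2.symm)) hik
    all_goals ring

lemma sv_multiset_eq (m n : ℕ) (hmn : m ≤ n)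
    (U₁ U₂ : Matrix (Fin m) (Fin m) ℝ) (V₁ V₂ : Matrix (Fin n) (Fin n) ℝ)
    (hU₁ : U₁ * U₁ᵀ = 1) (hU₁' : U₁ᵀ * U₁ = 1)
    (hU₂ : U₂ * U₂ᵀ = 1) (hU₂' : U₂ᵀ * U₂ = 1)
    (hV₁' : V₁ᵀ * V₁ = 1) (hV₂' : V₂ᵀ * V₂ = 1)
    (δ ε : Fin m → ℝ) (hδ0 : ∀ i, 0 ≤ δ i) (hε0 : ∀ i, 0 ≤ ε i)
    (heq : U₁ * diagMN m n δ * V₁ᵀ = U₂ * diagMN m n ε * V₂ᵀ) :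
    Multiset.map δ Finset.univ.val = Multiset.map ε Finset.univ.val := by
  have hMMt : ∀ (U : Matrix (Fin m) (Fin m) ℝ) (V : Matrix (Fin n) (Fin n) ℝ)
      (γ : Fin m → ℝ), Vᵀ * V = 1 →
      (U * diagMN m n γ * Vᵀ) * (U * diagMN m n γ * Vᵀ)ᵀ
        = U * Matrix.diagonal (fun i => γ i ^ 2) * Uᵀ := by
    intro U V γ hV
    rw [Matrix.transpose_mul, Matrix.transpose_mul, Matrix.transpose_transpose]
    calc U * diagMN m n γ * Vᵀ * (V * ((diagMN m n γ)ᵀ * Uᵀ))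
        = U * (diagMN m n γ * ((Vᵀ * V) * ((diagMN m n γ)ᵀ * Uᵀ))) := by
          simp only [Matrix.mul_assoc]
      _ = U * (diagMN m n γ * ((diagMN m n γ)ᵀ * Uᵀ)) := by rw [hV, Matrix.one_mul]
      _ = U * (diagMN m n γ * (diagMN m n γ)ᵀ) * Uᵀ := by simp only [Matrix.mul_assoc]
      _ = U * Matrix.diagonal (fun i => γ i ^ 2) * Uᵀ := by
          rw [diagMN_mul_transpose m n hmn]
  have hconj : U₁ * Matrix.diagonal (fun i => δ i ^ 2) * U₁ᵀ
      = U₂ * Matrix.diagonal (fun i => ε i ^ 2) * U₂ᵀ := by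
    rw [← hMMt U₁ V₁ δ hV₁', ← hMMt U₂ V₂ ε hV₂', heq]
  have hdiag : Matrix.diagonal (fun i => δ i ^ 2)
      = (U₁ᵀ * U₂) * Matrix.diagonal (fun i => ε i ^ 2) * (U₁ᵀ * U₂)ᵀ := by
    have h2 : (U₁ᵀ * U₂)ᵀ = U₂ᵀ * U₁ := by
      rw [Matrix.transpose_mul, Matrix.transpose_transpose]
    rw [h2]
    calc Matrix.diagonal (fun i => δ i ^ 2)
        = (U₁ᵀ * U₁) * Matrix.diagonal (fun i => δ i ^ 2) * (U₁ᵀ * U₁) := by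
          rw [hU₁']; rw [Matrix.one_mul, Matrix.mul_one]
      _ = U₁ᵀ * (U₁ * Matrix.diagonal (fun i => δ i ^ 2) * U₁ᵀ) * U₁ := by
          simp only [Matrix.mul_assoc]
      _ = U₁ᵀ * (U₂ * Matrix.diagonal (fun i => ε i ^ 2) * U₂ᵀ) * U₁ := by rw [hconj]
      _ = U₁ᵀ * U₂ * Matrix.diagonal (fun i => ε i ^ 2) * (U₂ᵀ * U₁) := by
          simp only [Matrix.mul_assoc]
  have hWW : (U₁ᵀ * U₂) * (U₁ᵀ * U₂)ᵀ = 1 := by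
    rw [Matrix.transpose_mul, Matrix.transpose_transpose]
    calc U₁ᵀ * U₂ * (U₂ᵀ * U₁) = U₁ᵀ * (U₂ * U₂ᵀ) * U₁ := by simp only [Matrix.mul_assoc]
      _ = 1 := by rw [hU₂, Matrix.mul_one, hU₁']
  have hWW' : (U₁ᵀ * U₂)ᵀ * (U₁ᵀ * U₂) = 1 := by
    rw [Matrix.transpose_mul, Matrix.transpose_transpose]
    calc U₂ᵀ * U₁ * (U₁ᵀ * U₂) = U₂ᵀ * (U₁ * U₁ᵀ) * U₂ := by simp only [Matrix.mul_assoc]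
      _ = 1 := by rw [hU₁, Matrix.mul_one, hU₂']
  have hsq := diag_conj_multiset m (U₁ᵀ * U₂) hWW hWW'
    (fun i => δ i ^ 2) (fun i => ε i ^ 2) hdiag
  have hmapδ : Multiset.map δ Finset.univ.val
      = Multiset.map Real.sqrt (Multiset.map (fun i => δ i ^ 2) Finset.univ.val) := by
    rw [Multiset.map_map]
    refine (Multiset.map_congr rfl fun i _ => ?_).symm
    exact Real.sqrt_sq (hδ0 i)
  have hmapε : Multiset.map ε Finset.univ.val
      = Multiset.map Real.sqrt (Multiset.map (fun i => ε i ^ 2) Finset.univ.val) := by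
    rw [Multiset.map_map]
    refine (Multiset.map_congr rfl fun i _ => ?_).symm
    exact Real.sqrt_sq (hε0 i)
  rw [hmapδ, hmapε, hsq]

lemma sum_comp_of_multiset_eq (m : ℕ) (δ ε : Fin m → ℝ) (f : ℝ → ℝ)
    (h : Multiset.map δ Finset.univ.val = Multiset.map ε Finset.univ.val) :
    ∑ i : Fin m, f (δ i) = ∑ i : Fin m, f (ε i) := by
  have h1 : ∑ i : Fin m, f (δ i) = ((Multiset.map δ Finset.univ.val).map f).sum := by
    rw [Multiset.map_map, Finset.sum_eq_multiset_sum]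
    rfl
  have h2 : ∑ i : Fin m, f (ε i) = ((Multiset.map ε Finset.univ.val).map f).sum := by
    rw [Multiset.map_map, Finset.sum_eq_multiset_sum]
    rfl
  rw [h1, h2, h]

lemma orth_pair {k : ℕ} {U : Matrix (Fin k) (Fin k) ℝ}
    (hU : U ∈ Matrix.orthogonalGroup (Fin k) ℝ) : U * Uᵀ = 1 ∧ Uᵀ * U = 1 := by
  have hstar : star U = Uᵀ := by
    ext i j; simp [Matrix.star_apply]
  constructor
  · have := (Matrix.mem_orthogonalGroup_iff (Fin k) ℝ).1 hU
    simpa only [hstar] using this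
  · have := (Matrix.mem_orthogonalGroup_iff' (Fin k) ℝ).1 hU
    simpa only [hstar] using this

theorem ts1_proximal_map (m n : ℕ) (hmn : m ≤ n) (a lam : ℝ) (ha : 0 < a) (hlam : 0 < lam)
    (σfun : Matrix (Fin m) (Fin n) ℝ → Fin m → ℝ)
    (hσfun : ∀ M : Matrix (Fin m) (Fin n) ℝ,
      (∀ i, 0 ≤ σfun M i) ∧ Antitone (σfun M) ∧
      ∃ U : Matrix (Fin m) (Fin m) ℝ, ∃ V : Matrix (Fin n) (Fin n) ℝ,
        U ∈ Matrix.orthogonalGroup (Fin m) ℝ ∧ V ∈ Matrix.orthogonalGroup (Fin n) ℝ ∧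
        M = U * diagMN m n (σfun M) * Vᵀ)
    (Y : Matrix (Fin m) (Fin n) ℝ)
    (U : Matrix (Fin m) (Fin m) ℝ) (V : Matrix (Fin n) (Fin n) ℝ)
    (hU : U ∈ Matrix.orthogonalGroup (Fin m) ℝ)
    (hV : V ∈ Matrix.orthogonalGroup (Fin n) ℝ)
    (σ : Fin m → ℝ) (hσ0 : ∀ i, 0 ≤ σ i) (hσdec : Antitone σ)
    (hY : Y = U * diagMN m n σ * Vᵀ)
    (g : ℝ → ℝ) (hg0 : ∀ s : ℝ, 0 ≤ s → 0 ≤ g s)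
    (hgmin : ∀ s : ℝ, 0 ≤ s → ∀ d : ℝ,
      1 / 2 * (g s - s) ^ 2 + lam * ((a + 1) * |g s| / (a + |g s|)) ≤
      1 / 2 * (d - s) ^ 2 + lam * ((a + 1) * |d| / (a + |d|))) :
    ∀ X : Matrix (Fin m) (Fin n) ℝ,
      1 / 2 * frobSq m n (U * diagMN m n (fun i => g (σ i)) * Vᵀ - Y)
          + lam * ∑ i, (a + 1) * σfun (U * diagMN m n (fun i => g (σ i)) * Vᵀ) i /
              (a + σfun (U * diagMN m n (fun i => g (σ i)) * Vᵀ) i) ≤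
      1 / 2 * frobSq m n (X - Y) + lam * ∑ i, (a + 1) * σfun X i / (a + σfun X i) := by
  intro X
  obtain ⟨hUo, hUo'⟩ := orth_pair hU
  obtain ⟨hVo, hVo'⟩ := orth_pair hV
  set Xs : Matrix (Fin m) (Fin n) ℝ := U * diagMN m n (fun i => g (σ i)) * Vᵀ with hXs
  obtain ⟨hτ'0, hτ'a, U₃, V₃, hU₃, hV₃, hXseq⟩ := hσfun Xs
  obtain ⟨hτ0, hτa, U₂, V₂, hU₂, hV₂, hXeq⟩ := hσfun X
  obtain ⟨hU₂o, hU₂o'⟩ := orth_pair hU₂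
  obtain ⟨hV₂o, hV₂o'⟩ := orth_pair hV₂
  obtain ⟨hU₃o, hU₃o'⟩ := orth_pair hU₃
  obtain ⟨hV₃o, hV₃o'⟩ := orth_pair hV₃
  set τ : Fin m → ℝ := σfun X with hτ
  set τ' : Fin m → ℝ := σfun Xs with hτ'
  have hgσ0 : ∀ i, 0 ≤ g (σ i) := fun i => hg0 (σ i) (hσ0 i)
  -- LHS Frobenius part
  have hfrobL : frobSq m n (Xs - Y) = ∑ i : Fin m, (g (σ i) - σ i) ^ 2 := by
    rw [hXs, hY]
    have : U * diagMN m n (fun i => g (σ i)) * Vᵀ - U * diagMN m n σ * Vᵀ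
        = U * (diagMN m n (fun i => g (σ i)) - diagMN m n σ) * Vᵀ := by
      rw [Matrix.mul_sub, Matrix.sub_mul]
    rw [this, diagMN_sub, frobSq_conj m n U V hUo' hVo', frobSq_diagMN m n hmn]
  -- LHS penalty part
  have hpenL : ∑ i : Fin m, (a + 1) * τ' i / (a + τ' i)
      = ∑ i : Fin m, (a + 1) * g (σ i) / (a + g (σ i)) := by
    have hms := sv_multiset_eq m n hmn U₃ U V₃ V hU₃o hU₃o' hUo hUo' hV₃o' hVo'
      τ' (fun i => g (σ i)) hτ'0 hgσ0 (by rw [← hXseq, hXs])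
    exact sum_comp_of_multiset_eq m τ' (fun i => g (σ i))
      (fun t => (a + 1) * t / (a + t)) hms
  -- RHS Frobenius lower bound via von Neumann
  have hfrobX : frobSq m n X = ∑ i : Fin m, τ i ^ 2 := by
    rw [hXeq, frobSq_conj m n U₂ V₂ hU₂o' hV₂o', frobSq_diagMN m n hmn]
  have hfrobY : frobSq m n Y = ∑ i : Fin m, σ i ^ 2 := by
    rw [hY, frobSq_conj m n U V hUo' hVo', frobSq_diagMN m n hmn]
  have hvn : innerM m n X Y ≤ ∑ i : Fin m, τ i * σ i := by
    rw [hXeq, hY]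
    exact vonNeumann m n hmn U₂ U V₂ V hU₂o hU₂o' hUo hUo' hV₂o hV₂o' hVo hVo'
      τ σ hτ0 hσ0 hτa hσdec
  have hfrobR : ∑ i : Fin m, (τ i - σ i) ^ 2 ≤ frobSq m n (X - Y) := by
    rw [frobSq_expand, hfrobX, hfrobY]
    have hexp : ∑ i : Fin m, (τ i - σ i) ^ 2
        = ∑ i : Fin m, τ i ^ 2 - 2 * ∑ i : Fin m, τ i * σ i + ∑ i : Fin m, σ i ^ 2 := by
      rw [Finset.mul_sum, ← Finset.sum_sub_distrib, ← Finset.sum_add_distrib]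
      exact Finset.sum_congr rfl fun i _ => by ring
    rw [hexp]
    have := hvn
    linarith
  -- termwise minimality
  have hterm : ∑ i : Fin m, (1 / 2 * (g (σ i) - σ i) ^ 2
        + lam * ((a + 1) * g (σ i) / (a + g (σ i))))
      ≤ ∑ i : Fin m, (1 / 2 * (τ i - σ i) ^ 2 + lam * ((a + 1) * τ i / (a + τ i))) := by
    refine Finset.sum_le_sum fun i _ => ?_
    have h := hgmin (σ i) (hσ0 i) (τ i)
    rwa [abs_of_nonneg (hgσ0 i), abs_of_nonneg (hτ0 i)] at h
  -- assemble
  have hLHS : 1 / 2 * frobSq m n (Xs - Y) + lam * ∑ i : Fin m, (a + 1) * τ' i / (a + τ' i)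
      = ∑ i : Fin m, (1 / 2 * (g (σ i) - σ i) ^ 2
          + lam * ((a + 1) * g (σ i) / (a + g (σ i)))) := by
    rw [hfrobL, hpenL, Finset.mul_sum, Finset.mul_sum, ← Finset.sum_add_distrib]
  have hRHS : ∑ i : Fin m, (1 / 2 * (τ i - σ i) ^ 2 + lam * ((a + 1) * τ i / (a + τ i)))
      ≤ 1 / 2 * frobSq m n (X - Y) + lam * ∑ i : Fin m, (a + 1) * τ i / (a + τ i) := by
    have hsplit : ∑ i : Fin m, (1 / 2 * (τ i - σ i) ^ 2 + lam * ((a + 1) * τ i / (a + τ i)))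
        = 1 / 2 * ∑ i : Fin m, (τ i - σ i) ^ 2
          + lam * ∑ i : Fin m, (a + 1) * τ i / (a + τ i) := by
      rw [Finset.sum_add_distrib, ← Finset.mul_sum, ← Finset.mul_sum]
    rw [hsplit]
    linarith [hfrobR]
  rw [hLHS]
  exact le_trans hterm hRHS
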